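/- Let k ≥ 7 be odd and let T be any C_4-free graph on (k-3)/2 vertices. Then the graph G = T ∨ (I_{n-(k-1)/2} ∪ K_2) contains no copy of K_{2,2,2} and no path on k vertices, where K_2 is a single edge uv disjoint from the independent set. -/

import Mathlib

open SimpleGraph

/-- `H` has a copy in `G`, i.e. `G` contains `H` as a (not necessarily induced) subgraph. -/
def CopyIn {α β : Type*} (H : SimpleGraph α) (G : SimpleGraph β) : Prop :=
  ∃ f : α ↪ β, ∀ a b, H.Adj a b → G.Adj (f a) (f b)

/-- The join `G ∨ H` of two graphs: disjoint union plus all edges in between. -/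
def graphJoin {α β : Type*} (G : SimpleGraph α) (H : SimpleGraph β) : SimpleGraph (α ⊕ β) where
  Adj x y := (∃ a b, x = Sum.inl a ∧ y = Sum.inl b ∧ G.Adj a b) ∨
    (∃ a b, x = Sum.inr a ∧ y = Sum.inr b ∧ H.Adj a b) ∨
    (x.isLeft ∧ y.isRight) ∨ (x.isRight ∧ y.isLeft)
  symm := by
    constructor
    rintro x y (⟨a, b, rfl, rfl, h⟩ | ⟨a, b, rfl, rfl, h⟩ | ⟨h1, h2⟩ | ⟨h1, h2⟩)
    · exact Or.inl ⟨b, a, rfl, rfl, h.symm⟩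
    · exact Or.inr (Or.inl ⟨b, a, rfl, rfl, h.symm⟩)
    · exact Or.inr (Or.inr (Or.inr ⟨h2, h1⟩))
    · exact Or.inr (Or.inr (Or.inl ⟨h2, h1⟩))
  loopless := by
    constructor
    rintro x (⟨a, b, rfl, heq, h⟩ | ⟨a, b, rfl, heq, h⟩ | ⟨h1, h2⟩ | ⟨h1, h2⟩)
    · cases heq; exact G.loopless.irrefl _ h
    · cases heq; exact H.loopless.irrefl _ h
    · cases x <;> simp_all
    · cases x <;> simp_all

/-- A matching with `t` edges. -/
def matchingGraph (t : ℕ) : SimpleGraph (Fin t × Fin 2) :=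
  SimpleGraph.fromRel (fun p q => p.1 = q.1)

/-- The star with `t` edges. -/
def starGraph (t : ℕ) : SimpleGraph (Fin 1 ⊕ Fin t) := completeBipartiteGraph (Fin 1) (Fin t)

/-- Turán number of a single forbidden graph. -/
noncomputable def exNum1 {α : Type*} (n : ℕ) (A : SimpleGraph α) : ℕ :=
  sSup {e | ∃ G : SimpleGraph (Fin n), ¬ CopyIn A G ∧ e = G.edgeSet.ncard}

/-- Turán number of two forbidden graphs. -/
noncomputable def exNum2 {α β : Type*} (n : ℕ) (A : SimpleGraph α) (B : SimpleGraph β) : ℕ :=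
  sSup {e | ∃ G : SimpleGraph (Fin n),
    ¬ CopyIn A G ∧ ¬ CopyIn B G ∧ e = G.edgeSet.ncard}

/-- Connected Turán number of two forbidden graphs. -/
noncomputable def exConn2 {α β : Type*} (n : ℕ) (A : SimpleGraph α) (B : SimpleGraph β) : ℕ :=
  sSup {e | ∃ G : SimpleGraph (Fin n),
    G.Connected ∧ ¬ CopyIn A G ∧ ¬ CopyIn B G ∧ e = G.edgeSet.ncard}

/-- Turán number of a family of forbidden graphs. -/
noncomputable def exNumFam (n : ℕ) (F : Set (Σ V : Type, SimpleGraph V)) : ℕ :=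
  sSup {e | ∃ G : SimpleGraph (Fin n),
    (∀ M ∈ F, ¬ CopyIn M.2 G) ∧ e = G.edgeSet.ncard}

/-- The family of graphs obtained from `H` by deleting one color class of a proper coloring
of `H` with `χ(H)` colors. -/
def delClassFam {W : Type} (H : SimpleGraph W) : Set (Σ V : Type, SimpleGraph V) :=
  {M | ∃ (m : ℕ) (C : H.Coloring (Fin m)) (c : Fin m),
    H.chromaticNumber = (m : ℕ∞) ∧
    M = ⟨{v : W | C v ≠ c}, H.induce {v : W | C v ≠ c}⟩}

/-- The family of graphs obtained from `H` by deleting two adjacent vertices. -/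
def delPairFam {W : Type} (H : SimpleGraph W) : Set (Σ V : Type, SimpleGraph V) :=
  {M | ∃ u v : W, H.Adj u v ∧
    M = ⟨{x : W | x ≠ u ∧ x ≠ v}, H.induce {x : W | x ≠ u ∧ x ≠ v}⟩}


section AuxC4Join

-- right-right adjacency forces the K2 vertices
lemma rr_adj {t m : ℕ} {T : SimpleGraph (Fin t)} {a b : Fin m ⊕ Fin 2}
    (h : (graphJoin T ((⊥ : SimpleGraph (Fin m)) ⊕g completeGraph (Fin 2))).Adj
      (Sum.inr a) (Sum.inr b)) :
    ∃ x y : Fin 2, x ≠ y ∧ a = Sum.inr x ∧ b = Sum.inr y := by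
  rcases h with ⟨a', b', h1, h2, h3⟩ | ⟨a', b', h1, h2, h3⟩ | ⟨h1, h2⟩ | ⟨h1, h2⟩
  · exact absurd h1 (by simp)
  · cases h1; cases h2
    cases a with
    | inl x => cases b <;> simp [SimpleGraph.sum_adj] at h3
    | inr x => cases b with
      | inl y => simp [SimpleGraph.sum_adj] at h3
      | inr y =>
        simp only [SimpleGraph.sum_adj, completeGraph_eq_top, top_adj] at h3
        exact ⟨x, y, h3, rfl, rfl⟩
  · simp at h1
  · simp at h2

lemma ll_adj {t m : ℕ} {T : SimpleGraph (Fin t)} {a b : Fin t}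
    (h : (graphJoin T ((⊥ : SimpleGraph (Fin m)) ⊕g completeGraph (Fin 2))).Adj
      (Sum.inl a) (Sum.inl b)) : T.Adj a b := by
  rcases h with ⟨a', b', h1, h2, h3⟩ | ⟨a', b', h1, h2, h3⟩ | ⟨h1, h2⟩ | ⟨h1, h2⟩
  · cases h1; cases h2; exact h3
  · exact absurd h1 (by simp)
  · simp at h2
  · simp at h1

lemma part1 (k n : ℕ) (hk : 7 ≤ k)
    (T : SimpleGraph (Fin ((k - 3) / 2))) (hT : ¬ CopyIn (cycleGraph 4) T) :
    ¬ CopyIn (completeMultipartiteGraph (fun _ : Fin 3 => Fin 2))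
      (graphJoin T
        ((⊥ : SimpleGraph (Fin (n - (k - 1) / 2))) ⊕g completeGraph (Fin 2))) := by
  rintro ⟨f, hf⟩
  classical
  -- if two vertices in distinct parts both map right, both images are K2 vertices
  have key : ∀ a b : (Σ _ : Fin 3, Fin 2), a.1 ≠ b.1 → ¬ (f a).isLeft → ¬ (f b).isLeft →
      ∃ x : Fin 2, f a = Sum.inr (Sum.inr x) := by
    intro a b hab ha hb
    obtain ⟨a', ha'⟩ := Sum.isRight_iff.mp (Sum.not_isLeft.mp ha)
    obtain ⟨b', hb'⟩ := Sum.isRight_iff.mp (Sum.not_isLeft.mp hb)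
    have hadj := hf a b (by simp [top_adj, hab])
    rw [ha', hb'] at hadj
    obtain ⟨x, y, _, hax, _⟩ := rr_adj hadj
    exact ⟨x, by rw [ha', hax]⟩
  set S : Finset (Σ _ : Fin 3, Fin 2) :=
    Finset.univ.filter (fun p => ¬ (f p).isLeft) with hS
  -- any three distinct vertices: each has a partner in a different part
  have key3 : ∀ a b c : (Σ _ : Fin 3, Fin 2), a ≠ b → a ≠ c → b ≠ c →
      ¬ (f a).isLeft → ¬ (f b).isLeft → ¬ (f c).isLeft →
      ∃ x : Fin 2, f a = Sum.inr (Sum.inr x) := by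
    intro a b c hab hac hbc ha hb hc
    by_cases h1 : a.1 ≠ b.1
    · exact key a b h1 ha hb
    · by_cases h2 : a.1 ≠ c.1
      · exact key a c h2 ha hc
      · exfalso
        push_neg at h1 h2
        have h3 : b.1 = c.1 := h1.symm.trans h2
        have := a.2.isLt; have := b.2.isLt; have := c.2.isLt
        have n1 : a.2.val ≠ b.2.val := fun h => hab (Sigma.ext h1 (heq_of_eq (Fin.ext h)))
        have n2 : a.2.val ≠ c.2.val := fun h => hac (Sigma.ext h2 (heq_of_eq (Fin.ext h)))
        have n3 : b.2.val ≠ c.2.val := fun h => hbc (Sigma.ext h3 (heq_of_eq (Fin.ext h)))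
        omega
  have hScard : S.card ≤ 2 := by
    by_contra hc
    push_neg at hc
    obtain ⟨a, haS, b, hbS, c, hcS, hab, hac, hbc⟩ := Finset.two_lt_card.mp hc
    rw [hS, Finset.mem_filter] at haS hbS hcS
    obtain ⟨xa, hxa⟩ := key3 a b c hab hac hbc haS.2 hbS.2 hcS.2
    obtain ⟨xb, hxb⟩ := key3 b a c hab.symm hbc hac hbS.2 haS.2 hcS.2
    obtain ⟨xc, hxc⟩ := key3 c a b hac.symm hbc.symm hab hcS.2 haS.2 hbS.2
    have := xa.isLt; have := xb.isLt; have := xc.isLt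
    have n1 : xa.val ≠ xb.val := fun h => hab (f.injective (by rw [hxa, hxb, Fin.ext h]))
    have n2 : xa.val ≠ xc.val := fun h => hac (f.injective (by rw [hxa, hxc, Fin.ext h]))
    have n3 : xb.val ≠ xc.val := fun h => hbc (f.injective (by rw [hxb, hxc, Fin.ext h]))
    omega
  -- find a part fully mapped to the left
  have himg : (S.image Sigma.fst).card ≤ 2 := le_trans Finset.card_image_le hScard
  have hex : ∃ i1 : Fin 3, i1 ∉ S.image Sigma.fst := by
    by_contra hno
    push_neg at hno
    have hsub : (Finset.univ : Finset (Fin 3)) ⊆ S.image Sigma.fst := fun i _ => hno i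
    have := Finset.card_le_card hsub
    simp at this
    omega
  obtain ⟨i1, hi1⟩ := hex
  have hleft : ∀ j : Fin 2, (f ⟨i1, j⟩).isLeft := by
    intro j
    by_contra hr
    exact hi1 (Finset.mem_image_of_mem _
      (show (⟨i1, j⟩ : Σ _ : Fin 3, Fin 2) ∈ S by rw [hS, Finset.mem_filter]; exact ⟨Finset.mem_univ _, hr⟩))
  set Q : Finset (Σ _ : Fin 3, Fin 2) := Finset.univ.filter (fun p => p.1 ≠ i1) with hQ
  have hQcard : Q.card = 4 := by rw [hQ]; fin_cases i1 <;> decide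
  have h2le : 1 < (Q \ S).card := by
    have := Finset.le_card_sdiff S Q
    omega
  obtain ⟨x, hx, y, hy, hxy⟩ := Finset.one_lt_card.mp h2le
  rw [Finset.mem_sdiff, hQ, Finset.mem_filter, hS, Finset.mem_filter] at hx hy
  have hx1 : x.1 ≠ i1 := hx.1.2
  have hy1 : y.1 ≠ i1 := hy.1.2
  have hxl : (f x).isLeft := by
    by_contra hc; exact hx.2 ⟨Finset.mem_univ x, hc⟩
  have hyl : (f y).isLeft := by
    by_contra hc; exact hy.2 ⟨Finset.mem_univ y, hc⟩
  obtain ⟨b0, hb0⟩ := Sum.isLeft_iff.mp (hleft 0)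
  obtain ⟨b2, hb2⟩ := Sum.isLeft_iff.mp (hleft 1)
  obtain ⟨b1, hb1⟩ := Sum.isLeft_iff.mp hxl
  obtain ⟨b3, hb3⟩ := Sum.isLeft_iff.mp hyl
  have d02 : (⟨i1, 0⟩ : Σ _ : Fin 3, Fin 2) ≠ ⟨i1, 1⟩ := by simp
  have d01 : (⟨i1, 0⟩ : Σ _ : Fin 3, Fin 2) ≠ x := fun h => hx1 (by rw [← h])
  have d03 : (⟨i1, 0⟩ : Σ _ : Fin 3, Fin 2) ≠ y := fun h => hy1 (by rw [← h])
  have d21 : (⟨i1, 1⟩ : Σ _ : Fin 3, Fin 2) ≠ x := fun h => hx1 (by rw [← h])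
  have d23 : (⟨i1, 1⟩ : Σ _ : Fin 3, Fin 2) ≠ y := fun h => hy1 (by rw [← h])
  have adj01 : T.Adj b0 b1 := by
    have h := hf ⟨i1, 0⟩ x (by simpa using (Ne.symm hx1))
    rw [hb0, hb1] at h; exact ll_adj h
  have adj12 : T.Adj b1 b2 := by
    have h := hf x ⟨i1, 1⟩ (by simpa using hx1)
    rw [hb1, hb2] at h; exact ll_adj h
  have adj23 : T.Adj b2 b3 := by
    have h := hf ⟨i1, 1⟩ y (by simpa using (Ne.symm hy1))
    rw [hb2, hb3] at h; exact ll_adj h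
  have adj30 : T.Adj b3 b0 := by
    have h := hf y ⟨i1, 0⟩ (by simpa using hy1)
    rw [hb3, hb0] at h; exact ll_adj h
  have hini : ∀ (p q : Σ _ : Fin 3, Fin 2) (bp bq : Fin ((k-3)/2)), p ≠ q →
      f p = Sum.inl bp → f q = Sum.inl bq → bp ≠ bq := by
    intro p q bp bq hpq hp hq hbb
    exact hpq (f.injective (by rw [hp, hq, hbb]))
  have n01 : b0 ≠ b1 := hini _ _ _ _ d01 hb0 hb1
  have n02 : b0 ≠ b2 := hini _ _ _ _ d02 hb0 hb2
  have n03 : b0 ≠ b3 := hini _ _ _ _ d03 hb0 hb3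
  have n12 : b1 ≠ b2 := (hini _ _ _ _ d21 hb2 hb1).symm
  have n13 : b1 ≠ b3 := hini _ _ _ _ hxy hb1 hb3
  have n23 : b2 ≠ b3 := hini _ _ _ _ d23 hb2 hb3
  apply hT
  clear hini hxy d01 d02 d03 d21 d23 hb0 hb1 hb2 hb3 hxl hyl hx1 hy1 hx hy
    hQcard h2le hQ hi1 hleft himg hScard key3 key hS hf
  clear x y Q S f
  refine ⟨⟨![b0, b1, b2, b3], ?_⟩, ?_⟩
  · intro u v huv
    fin_cases u <;> fin_cases v <;> simp_all
  · intro u v huv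
    have t10 := adj01.symm; have t21 := adj12.symm
    have t32 := adj23.symm; have t03 := adj30.symm
    rw [cycleGraph_adj'] at huv
    fin_cases u <;> fin_cases v <;> simp +decide at huv <;> assumption

lemma part2 (k n : ℕ) (hk : 7 ≤ k) (hodd : Odd k)
    (T : SimpleGraph (Fin ((k - 3) / 2))) :
    ¬ CopyIn (pathGraph k)
      (graphJoin T
        ((⊥ : SimpleGraph (Fin (n - (k - 1) / 2))) ⊕g completeGraph (Fin 2))) := by
  rintro ⟨f, hf⟩
  classical
  set Ls : Finset (Fin k) := Finset.univ.filter (fun i => (f i).isLeft) with hLs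
  set Rs : Finset (Fin k) := Finset.univ.filter (fun i => ¬ (f i).isLeft) with hRs
  have hLR : Ls.card + Rs.card = k := by
    rw [hLs, hRs, Finset.card_filter_add_card_filter_not]
    simp
  -- Ls.card ≤ t
  have hL : Ls.card ≤ (k - 3) / 2 := by
    have h1 : Ls.card = (Ls.image f).card := (Finset.card_image_of_injective _ f.injective).symm
    have h2 : Ls.image f ⊆ (Finset.univ : Finset (Fin ((k - 3) / 2))).image Sum.inl := by
      intro v hv
      obtain ⟨i, hi, rfl⟩ := Finset.mem_image.mp hv
      rw [hLs, Finset.mem_filter] at hi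
      obtain ⟨b, hb⟩ := Sum.isLeft_iff.mp hi.2
      rw [hb]
      exact Finset.mem_image_of_mem _ (Finset.mem_univ b)
    calc Ls.card = (Ls.image f).card := h1
      _ ≤ ((Finset.univ : Finset (Fin ((k - 3) / 2))).image Sum.inl).card := Finset.card_le_card h2
      _ ≤ (Finset.univ : Finset (Fin ((k - 3) / 2))).card := Finset.card_image_le
      _ = (k - 3) / 2 := by simp
  -- consecutive right-right pairs
  have key : ∀ i j : Fin k, (i : ℕ) + 1 = (j : ℕ) → ¬ (f i).isLeft → ¬ (f j).isLeft →
      ∃ x y : Fin 2, x ≠ y ∧ f i = Sum.inr (Sum.inr x) ∧ f j = Sum.inr (Sum.inr y) := by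
    intro i j hij hi hj
    obtain ⟨a, ha⟩ := Sum.isRight_iff.mp (Sum.not_isLeft.mp hi)
    obtain ⟨b, hb⟩ := Sum.isRight_iff.mp (Sum.not_isLeft.mp hj)
    have hadj := hf i j (pathGraph_adj.mpr (Or.inl hij))
    rw [ha, hb] at hadj
    obtain ⟨x, y, hxy, hax, hby⟩ := rr_adj hadj
    exact ⟨x, y, hxy, by rw [ha, hax], by rw [hb, hby]⟩
  set Rs' : Finset (Fin k) :=
    Rs.filter (fun i => ∃ j : Fin k, (j : ℕ) = (i : ℕ) + 1 ∧ (f j).isLeft) with hRs'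
  have hR' : Rs'.card ≤ Ls.card := by
    apply Finset.card_le_card_of_injOn
      (fun (i : Fin k) => if h : (i : ℕ) + 1 < k then (⟨(i : ℕ) + 1, h⟩ : Fin k) else i)
    · intro i hi
      rw [hRs', Finset.mem_coe, Finset.mem_filter] at hi
      obtain ⟨j, hj1, hj2⟩ := hi.2
      have hjk : (i : ℕ) + 1 < k := hj1 ▸ j.isLt
      have : (⟨(i : ℕ) + 1, hjk⟩ : Fin k) = j := Fin.ext hj1.symm
      simp only [dif_pos hjk, this]
      rw [hLs, Finset.mem_coe, Finset.mem_filter]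
      exact ⟨Finset.mem_univ _, hj2⟩
    · intro i1 h1 i2 h2 heq
      simp only [Finset.mem_coe] at h1 h2
      rw [hRs', Finset.mem_filter] at h1 h2
      obtain ⟨j1, hj1, _⟩ := h1.2
      obtain ⟨j2, hj2, _⟩ := h2.2
      have hk1 : (i1 : ℕ) + 1 < k := hj1 ▸ j1.isLt
      have hk2 : (i2 : ℕ) + 1 < k := hj2 ▸ j2.isLt
      simp only at heq
      rw [dif_pos hk1, dif_pos hk2] at heq
      have hv := congrArg Fin.val heq
      simp only at hv
      ext
      omega
  set Bs : Finset (Fin k) :=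
    Rs.filter (fun i => ∃ j : Fin k, (j : ℕ) = (i : ℕ) + 1 ∧ ¬ (f j).isLeft) with hBs
  have hB : Bs.card ≤ 1 := by
    by_contra hc
    push_neg at hc
    obtain ⟨i1, hi1, i2, hi2, hne⟩ := Finset.one_lt_card.mp hc
    rw [hBs, Finset.mem_filter, hRs, Finset.mem_filter] at hi1 hi2
    obtain ⟨j1, hj1, hj1r⟩ := hi1.2
    obtain ⟨j2, hj2, hj2r⟩ := hi2.2
    obtain ⟨x1, y1, hxy1, hfi1, hfj1⟩ := key i1 j1 hj1.symm hi1.1.2 hj1r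
    obtain ⟨x2, y2, hxy2, hfi2, hfj2⟩ := key i2 j2 hj2.symm hi2.1.2 hj2r
    -- three distinct positions map into a 2-element set
    have hval : ∀ (p q : Fin k) (xp xq : Fin 2), p ≠ q →
        f p = Sum.inr (Sum.inr xp) → f q = Sum.inr (Sum.inr xq) → xp ≠ xq := by
      intro p q xp xq hpq hp hq hxx
      apply hpq; apply f.injective; rw [hp, hq, hxx]
    by_cases hcase : (j1 : ℕ) = (i2 : ℕ)
    · -- i1, i2=j1, j2 distinct
      have e1 : y1 ≠ y2 := hval j1 j2 y1 y2 (by intro h; apply hne; ext; omega) hfj1 hfj2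
      have e2 : x1 ≠ y1 := hval i1 j1 x1 y1 (by intro h; apply absurd (congrArg Fin.val h); omega) hfi1 hfj1
      have e3 : x1 ≠ y2 := hval i1 j2 x1 y2 (by intro h; apply absurd (congrArg Fin.val h); omega) hfi1 hfj2
      have b1 := x1.isLt; have b2 := y1.isLt; have b3 := y2.isLt
      have n1 : x1.val ≠ y1.val := fun h => e2 (Fin.ext h)
      have n2 : x1.val ≠ y2.val := fun h => e3 (Fin.ext h)
      have n3 : y1.val ≠ y2.val := fun h => e1 (Fin.ext h)
      omega
    · by_cases hcase2 : (j2 : ℕ) = (i1 : ℕ)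
      · have e1 : y2 ≠ y1 := hval j2 j1 y2 y1 (by intro h; apply hne; ext; omega) hfj2 hfj1
        have e2 : x2 ≠ y2 := hval i2 j2 x2 y2 (by intro h; apply absurd (congrArg Fin.val h); omega) hfi2 hfj2
        have e3 : x2 ≠ y1 := hval i2 j1 x2 y1 (by intro h; apply absurd (congrArg Fin.val h); omega) hfi2 hfj1
        have b1 := x2.isLt; have b2 := y2.isLt; have b3 := y1.isLt
        have n1 : x2.val ≠ y2.val := fun h => e2 (Fin.ext h)
        have n2 : x2.val ≠ y1.val := fun h => e3 (Fin.ext h)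
        have n3 : y2.val ≠ y1.val := fun h => e1 (Fin.ext h)
        omega
      · -- i1, j1, i2 distinct
        have hne' : (i1 : ℕ) ≠ (i2 : ℕ) := fun h => hne (Fin.ext h)
        have e1 : x1 ≠ y1 := hval i1 j1 x1 y1 (by intro h; apply absurd (congrArg Fin.val h); omega) hfi1 hfj1
        have e2 : x1 ≠ x2 := hval i1 i2 x1 x2 hne hfi1 hfi2
        have e3 : y1 ≠ x2 := hval j1 i2 y1 x2 (by intro h; apply hcase; exact congrArg Fin.val h) hfj1 hfi2
        have b1 := x1.isLt; have b2 := y1.isLt; have b3 := x2.isLt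
        have n1 : x1.val ≠ y1.val := fun h => e1 (Fin.ext h)
        have n2 : x1.val ≠ x2.val := fun h => e2 (Fin.ext h)
        have n3 : y1.val ≠ x2.val := fun h => e3 (Fin.ext h)
        omega
  have hklast : 0 < k := by omega
  have hSub : Rs ⊆ Rs' ∪ (Bs ∪ {(⟨k - 1, by omega⟩ : Fin k)}) := by
    intro i hi
    by_cases hik : (i : ℕ) + 1 < k
    · set j : Fin k := ⟨(i : ℕ) + 1, hik⟩ with hj
      by_cases hjl : (f j).isLeft
      · exact Finset.mem_union_left _ (by
          rw [hRs', Finset.mem_filter]; exact ⟨hi, j, rfl, hjl⟩)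
      · exact Finset.mem_union_right _ (Finset.mem_union_left _ (by
          rw [hBs, Finset.mem_filter]; exact ⟨hi, j, rfl, hjl⟩))
    · have : i = (⟨k - 1, by omega⟩ : Fin k) := by ext; have := i.isLt; simp; omega
      exact Finset.mem_union_right _ (Finset.mem_union_right _ (by simp [this]))
  have hRcard : Rs.card ≤ Ls.card + 2 := by
    calc Rs.card ≤ (Rs' ∪ (Bs ∪ {(⟨k - 1, by omega⟩ : Fin k)})).card := Finset.card_le_card hSub
      _ ≤ Rs'.card + (Bs ∪ {(⟨k - 1, by omega⟩ : Fin k)}).card := Finset.card_union_le _ _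
      _ ≤ Rs'.card + (Bs.card + 1) := by
          have := Finset.card_union_le Bs {(⟨k - 1, by omega⟩ : Fin k)}
          simp only [Finset.card_singleton] at this; omega
      _ ≤ Ls.card + 2 := by omega
  obtain ⟨c, hc⟩ := hodd
  omega

end AuxC4Join

theorem C4_free_join_K222_Pk_free (k n : ℕ) (hk : 7 ≤ k) (hodd : Odd k)
    (T : SimpleGraph (Fin ((k - 3) / 2))) (hT : ¬ CopyIn (cycleGraph 4) T) :
    ¬ CopyIn (completeMultipartiteGraph (fun _ : Fin 3 => Fin 2))
      (graphJoin T
        ((⊥ : SimpleGraph (Fin (n - (k - 1) / 2))) ⊕g completeGraph (Fin 2))) ∧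
    ¬ CopyIn (pathGraph k)
      (graphJoin T
        ((⊥ : SimpleGraph (Fin (n - (k - 1) / 2))) ⊕g completeGraph (Fin 2))) := by
  exact ⟨part1 k n hk T hT, part2 k n hk hodd T⟩
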